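/- If languages K and L have finite symmetric difference, then K has a finite SSF if and only if L has a finite SSF. -/
import Mathlib


/-- `npow w n` is the word `w` repeated `n` times. -/
def npow {α : Type*} (w : List α) : ℕ → List α
  | 0 => []
  | n + 1 => w ++ npow w n

/-- `occ w x` is the number of occurrences of `x` as a factor of `w`,
i.e. the number of factorizations `w = s ++ x ++ t`. -/
def occ {α : Type*} [DecidableEq α] (w x : List α) : ℕ :=
  ((List.range (w.length + 1)).filter (fun i => x <+: w.drop i)).length

/-- A nonempty word is primitive if it is not a power of a shorter word. -/
def Primitive {α : Type*} (p : List α) : Prop :=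
  p ≠ [] ∧ ∀ (q : List α) (n : ℕ), p = npow q n → q = p

/-- `u` and `v` are `k`-abelian equivalent. -/
def KAbEq {α : Type*} [DecidableEq α] (k : ℕ) (u v : List α) : Prop :=
  ∀ x : List α, x.length ≤ k → occ u x = occ v x

/-- `X` is a separating set of factors of `L`. -/
def IsSSF {α : Type*} [DecidableEq α] (X L : Set (List α)) : Prop :=
  ∀ u ∈ L, ∀ v ∈ L, u ≠ v → ∃ x ∈ X, occ u x ≠ occ v x

/-- `L` has a finite separating set of factors. -/
def HasFiniteSSF {α : Type*} [DecidableEq α] (L : Set (List α)) : Prop :=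
  ∃ X : Set (List α), X.Finite ∧ IsSSF X L


lemma occ_nil' {α : Type*} [DecidableEq α] (w : List α) : occ w [] = w.length + 1 := by
  simp [occ, List.nil_prefix]

lemma occ_self' {α : Type*} [DecidableEq α] (w : List α) : occ w w = 1 := by
  unfold occ
  rw [List.range_succ_eq_map]
  rw [List.filter_cons]
  simp only [List.drop_zero, List.prefix_refl, decide_true, if_true]
  have : (List.map Nat.succ (List.range w.length)).filter (fun i => decide (w <+: w.drop i)) = [] := by
    rw [List.filter_eq_nil_iff]
    intro a ha
    simp only [List.mem_map, List.mem_range] at ha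
    obtain ⟨i, hi, rfl⟩ := ha
    simp only [decide_eq_true_eq]
    intro hpre
    have := hpre.length_le
    simp [List.length_drop] at this
    omega
  rw [this]
  rfl

lemma occ_eq_zero' {α : Type*} [DecidableEq α] {u v : List α} (hne : u ≠ v)
    (hlen : u.length = v.length) : occ v u = 0 := by
  unfold occ
  rw [List.length_eq_zero_iff, List.filter_eq_nil_iff]
  intro i hi
  simp only [List.mem_range] at hi
  simp only [decide_eq_true_eq]
  intro hpre
  have h1 := hpre.length_le
  simp [List.length_drop] at h1
  have hi0 : i = 0 := by omega
  subst hi0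
  simp at hpre
  exact hne (List.prefix_iff_eq_take.mp hpre ▸ by simp [← hlen])

lemma isSSF_union' {α : Type*} [DecidableEq α] (X L F : Set (List α)) (hX : IsSSF X L) :
    IsSSF (X ∪ {[]} ∪ F) (L ∪ F) := by
  intro u hu v hv huv
  by_cases hlen : u.length = v.length
  · rcases hu with hu | hu
    · rcases hv with hv | hv
      · obtain ⟨x, hx, hne⟩ := hX u hu v hv huv
        exact ⟨x, Or.inl (Or.inl hx), hne⟩
      · refine ⟨v, Or.inr hv, ?_⟩
        rw [occ_self', occ_eq_zero' (Ne.symm huv) hlen.symm]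
        simp
    · refine ⟨u, Or.inr hu, ?_⟩
      rw [occ_self', occ_eq_zero' huv hlen]
      simp
  · refine ⟨[], Or.inl (Or.inr rfl), ?_⟩
    rw [occ_nil', occ_nil']
    omega

lemma hasFiniteSSF_of_union' {α : Type*} [DecidableEq α] {K L : Set (List α)}
    (hfin : (L \ K).Finite) (hK : HasFiniteSSF K) : HasFiniteSSF L := by
  obtain ⟨X, hXfin, hX⟩ := hK
  refine ⟨X ∪ {[]} ∪ (L \ K), (hXfin.union (Set.finite_singleton _)).union hfin, ?_⟩
  intro u hu v hv huv
  exact isSSF_union' X K (L \ K) hX u (by by_cases h : u ∈ K <;> simp [h, hu]) v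
    (by by_cases h : v ∈ K <;> simp [h, hv]) huv

/-- If `K` and `L` have finite symmetric difference, then `K` has a finite SSF
iff `L` does. -/
theorem stmt14 {α : Type*} [DecidableEq α] [Fintype α] (K L : Set (List α))
    (h : ((K \ L) ∪ (L \ K)).Finite) :
    HasFiniteSSF K ↔ HasFiniteSSF L := by
  have h1 : (K \ L).Finite := h.subset (Set.subset_union_left)
  have h2 : (L \ K).Finite := h.subset (Set.subset_union_right)
  exact ⟨hasFiniteSSF_of_union' h2, hasFiniteSSF_of_union' h1⟩
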